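/- Let β > 0, γ > 0, d > 0, ν ≥ 0 and R₀ = β/(γ+d) > 1, and set I* = 1 − 1/R₀. Then the 2×2 matrix J_E = [[−d − βI*(1+ν), −d − νβI*], [βI*, 0]] has negative trace and positive determinant; consequently both eigenvalues of J_E have negative real part. -/
import Mathlib


theorem stmt_4 (β γ d ν : ℝ) (hβ : 0 < β) (hγ : 0 < γ) (hd : 0 < d) (hν : 0 ≤ ν)
    (hR : 1 < β / (γ + d)) (I : ℝ) (hI : I = 1 - 1 / (β / (γ + d)))
    (J : Matrix (Fin 2) (Fin 2) ℝ)
    (hJ : J = !![-d - β * I * (1 + ν), -d - ν * β * I; β * I, 0]) :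
    J.trace < 0 ∧ 0 < J.det ∧
    ∀ z : ℂ, z ^ 2 - (J.trace : ℂ) * z + (J.det : ℂ) = 0 → z.re < 0 := by
  have hgd : 0 < γ + d := by linarith
  have hβgd : γ + d < β := by
    have := (one_lt_div hgd).mp hR
    linarith
  have hBI : 0 < β * I := by
    have : β * I = β - (γ + d) := by
      rw [hI]; field_simp
    rw [this]; linarith
  have hTr : J.trace = -d - β * I * (1 + ν) := by
    simp [hJ, Matrix.trace_fin_two]
  have hDet : J.det = (d + ν * (β * I)) * (β * I) := by
    simp [hJ, Matrix.det_fin_two]; ring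
  have hT : J.trace < 0 := by
    rw [hTr]; nlinarith
  have hD : 0 < J.det := by
    rw [hDet]; have h1 : 0 < d + ν * (β * I) := by positivity
    positivity
  refine ⟨hT, hD, ?_⟩
  intro z hz
  set T := J.trace
  set D := J.det
  have hre : z.re ^ 2 - z.im ^ 2 - T * z.re + D = 0 := by
    have := congrArg Complex.re hz
    simp [pow_two, Complex.mul_re, Complex.mul_im] at this
    nlinarith [this]
  have him : z.im * (2 * z.re - T) = 0 := by
    have := congrArg Complex.im hz
    simp [pow_two, Complex.mul_re, Complex.mul_im] at this
    nlinarith [this]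
  rcases mul_eq_zero.mp him with h | h
  · by_contra hx
    push_neg at hx
    rw [h] at hre
    nlinarith
  · nlinarith
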